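/- arXiv:1907.11878 — 7 statements merged into one kernel-verified Lean document; each statement's English description precedes it below -/
import Mathlib

section
/- Suppose additionally that for each i ∈ {1,2,3} the matrices j·Iₙ + Jᵢ and j·Iₙ − Jᵢ are positive semidefinite and there exist nonzero vectors v, w ∈ ℂⁿ with Jᵢ v = j·v and Jᵢ w = −j·w. If the spin polarization-scaling map Φ is positive (i.e., Φ(X) is positive semidefinite for every positive semidefinite X ∈ Mₙ(ℂ)), then |λᵢ| ≤ 1 for each i ∈ {1,2,3}. -/
open Matrix Kronecker
open scoped ComplexOrder

/-- The spin value `j = (n-1)/2` for an `n`-dimensional system. -/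
noncomputable def spinJ (n : ℕ) : ℝ := ((n : ℝ) - 1) / 2

/-- The spin polarization-scaling map
`Φ(X) = (1/n)·tr(X)·Iₙ + (3/(j(j+1)n))·Σᵢ λᵢ·tr(X Jᵢ)·Jᵢ`. -/
noncomputable def Phi (n : ℕ) (J : Fin 3 → Matrix (Fin n) (Fin n) ℂ) (lam : Fin 3 → ℝ)
    (X : Matrix (Fin n) (Fin n) ℂ) : Matrix (Fin n) (Fin n) ℂ :=
  ((1 / (n : ℝ) : ℝ) : ℂ) • X.trace • (1 : Matrix (Fin n) (Fin n) ℂ) +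
    ((3 / (spinJ n * (spinJ n + 1) * n) : ℝ) : ℂ) •
      ∑ i : Fin 3, (lam i : ℂ) • (X * J i).trace • J i

lemma aux_nonneg {n : ℕ} (c : ℝ) (w : Fin n → ℂ) (hw : w ≠ 0)
    (h : (0:ℂ) ≤ (c:ℂ) * (star w ⬝ᵥ w)) : 0 ≤ c := by
  have hs : star w ⬝ᵥ w = ((∑ k, Complex.normSq (w k) : ℝ) : ℂ) := by
    simp [dotProduct, Complex.normSq_eq_conj_mul_self]
  set s : ℝ := ∑ k, Complex.normSq (w k) with hsdef
  have hspos : 0 < s := by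
    obtain ⟨k, hk⟩ := Function.ne_iff.mp hw
    exact Finset.sum_pos' (fun k _ => Complex.normSq_nonneg _)
      ⟨k, Finset.mem_univ k, Complex.normSq_pos.mpr hk⟩
  rw [hs] at h
  have : (0:ℂ) ≤ ((c * s : ℝ) : ℂ) := by push_cast; exact h
  have hcs : 0 ≤ c * s := by exact_mod_cast this
  nlinarith

theorem necessary_condition_for_positivity
    (n : ℕ) (hn : 2 ≤ n) (J : Fin 3 → Matrix (Fin n) (Fin n) ℂ)
    (hherm : ∀ i, (J i).IsHermitian)
    (htr : ∀ i, (J i).trace = 0)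
    (htr2 : ∀ k l, (J k * J l).trace =
      if k = l then ((spinJ n * (spinJ n + 1) * (2 * spinJ n + 1) / 3 : ℝ) : ℂ) else 0)
    (hpos : ∀ i, (((spinJ n : ℝ) : ℂ) • (1 : Matrix (Fin n) (Fin n) ℂ) + J i).PosSemidef ∧
      (((spinJ n : ℝ) : ℂ) • (1 : Matrix (Fin n) (Fin n) ℂ) - J i).PosSemidef)
    (heig : ∀ i, (∃ v : Fin n → ℂ, v ≠ 0 ∧ J i *ᵥ v = ((spinJ n : ℝ) : ℂ) • v) ∧
      (∃ w : Fin n → ℂ, w ≠ 0 ∧ J i *ᵥ w = (-(spinJ n : ℝ) : ℂ) • w))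
    (lam : Fin 3 → ℝ)
    (hPhi : ∀ X : Matrix (Fin n) (Fin n) ℂ, X.PosSemidef → (Phi n J lam X).PosSemidef) :
    ∀ i, |lam i| ≤ 1 := by
  intro i
  set j : ℝ := spinJ n with hjdef
  have hn0 : (n : ℝ) ≠ 0 := by positivity
  have hjpos : 0 < j := by
    have : (2:ℝ) ≤ n := by exact_mod_cast hn
    simp only [hjdef, spinJ]; linarith
  have h2j : 2 * j + 1 = (n : ℝ) := by simp only [hjdef, spinJ]; ring
  -- the key computation: Φ(j•1 + Jᵢ) = j•1 + λᵢ•Jᵢ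
  set X : Matrix (Fin n) (Fin n) ℂ := ((j : ℝ) : ℂ) • 1 + J i with hX
  have htrX : X.trace = ((j * n : ℝ) : ℂ) := by
    simp [hX, Matrix.trace_add, Matrix.trace_smul, htr i, Matrix.trace_one]
  have htrXJ : ∀ k, (X * J k).trace =
      if k = i then ((j * (j + 1) * (2 * j + 1) / 3 : ℝ) : ℂ) else 0 := by
    intro k
    have : X * J k = ((j : ℝ) : ℂ) • J k + J i * J k := by
      simp [hX, Matrix.add_mul, Matrix.smul_mul]
    rw [this, Matrix.trace_add, Matrix.trace_smul, htr k, htr2 i k]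
    simp [eq_comm]
  have hkey : Phi n J lam X = ((j : ℝ) : ℂ) • 1 + ((lam i : ℝ) : ℂ) • J i := by
    unfold Phi
    rw [htrX]
    have hsum : ∑ k : Fin 3, (lam k : ℂ) • (X * J k).trace • J k =
        (lam i : ℂ) • ((j * (j + 1) * (2 * j + 1) / 3 : ℝ) : ℂ) • J i := by
      rw [Finset.sum_eq_single i]
      · rw [htrXJ i, if_pos rfl]
      · intro k _ hk; rw [htrXJ k, if_neg hk]; simp
      · simp
    rw [hsum, smul_smul, smul_smul, smul_smul]
    have e1 : ((1 / (n:ℝ) : ℝ) : ℂ) * ((j * n : ℝ) : ℂ) = ((j:ℝ):ℂ) := by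
      push_cast; field_simp
    have e2 : ((3 / (j * (j + 1) * n) : ℝ) : ℂ) * ((lam i : ℝ) : ℂ) *
        ((j * (j + 1) * (2 * j + 1) / 3 : ℝ) : ℂ) = ((lam i : ℝ) : ℂ) := by
      push_cast
      have h2jc : 2 * (j:ℂ) + 1 = (n:ℂ) := by exact_mod_cast h2j
      rw [h2jc]
      have hj0 : (j:ℂ) ≠ 0 := by exact_mod_cast hjpos.ne'
      have hj1 : (j:ℂ) + 1 ≠ 0 := by
        have : (0:ℝ) < j + 1 := by linarith
        exact_mod_cast this.ne'
      have hnc : ((n:ℝ):ℂ) ≠ 0 := by exact_mod_cast hn0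
      field_simp
    rw [hjdef] at e1 e2 ⊢
    rw [e1, e2]
  have hXpsd : X.PosSemidef := (hpos i).1
  have hM := hPhi X hXpsd
  rw [hkey] at hM
  -- test with the eigenvectors
  obtain ⟨⟨v, hv0, hv⟩, ⟨w, hw0, hw⟩⟩ := heig i
  have hupper : lam i ≤ 1 := by
    have h1 := hM.dotProduct_mulVec_nonneg w
    have hmv : (((j : ℝ) : ℂ) • 1 + ((lam i : ℝ) : ℂ) • J i) *ᵥ w
        = ((j * (1 - lam i) : ℝ) : ℂ) • w := by
      rw [Matrix.add_mulVec, Matrix.smul_mulVec, Matrix.smul_mulVec,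
        Matrix.one_mulVec, hw]
      rw [smul_smul, ← add_smul]
      congr 1
      push_cast; ring
    rw [hmv, dotProduct_smul, smul_eq_mul] at h1
    have := aux_nonneg _ w hw0 h1
    nlinarith
  have hlower : -1 ≤ lam i := by
    have h1 := hM.dotProduct_mulVec_nonneg v
    have hmv : (((j : ℝ) : ℂ) • 1 + ((lam i : ℝ) : ℂ) • J i) *ᵥ v
        = ((j * (1 + lam i) : ℝ) : ℂ) • v := by
      rw [Matrix.add_mulVec, Matrix.smul_mulVec, Matrix.smul_mulVec,
        Matrix.one_mulVec, hv]
      rw [smul_smul, ← add_smul]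
      congr 1
      push_cast; ring
    rw [hmv, dotProduct_smul, smul_eq_mul] at h1
    have := aux_nonneg _ v hv0 h1
    nlinarith
  exact abs_le.mpr ⟨hlower, hupper⟩
end

section
/- Suppose additionally that J₁ᵀ = J₁, J₂ᵀ = −J₂, J₃ᵀ = J₃. Then the spin polarization-scaling map Φ is completely positive (i.e., for every k ≥ 1, every linear map L on matrices indexed by Fin n × Fin k satisfying L(A ⊗ B) = Φ(A) ⊗ B for all A ∈ Mₙ(ℂ) and B ∈ M_k(ℂ), where ⊗ is the Kronecker product, maps positive semidefinite matrices to positive semidefinite matrices) if and only if the matrix Iₙ ⊗ Iₙ + (3/(j(j+1)))·(λ₁·J₁⊗J₁ − λ₂·J₂⊗J₂ + λ₃·J₃⊗J₃) is positive semidefinite. -/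
open Matrix Kronecker
open scoped ComplexOrder

lemma trace_std_mul {n : ℕ} (p q : Fin n) (M : Matrix (Fin n) (Fin n) ℂ) :
    (single p q (1:ℂ) * M).trace = M q p := by
  rw [Matrix.trace, Finset.sum_eq_single p]
  · simp [Matrix.diag]
  · intro b _ hb
    simp [Matrix.diag, Matrix.single_mul_apply_of_ne (1:ℂ) p q b b hb M]
  · simp

lemma trace_std {n : ℕ} (p q : Fin n) :
    (single p q (1:ℂ)).trace = if p = q then 1 else 0 := by
  rcases eq_or_ne p q with rfl | h
  · simp [Matrix.trace, Matrix.diag, single]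
  · rw [Matrix.trace, if_neg h]
    apply Finset.sum_eq_zero
    intro a _
    simp [Matrix.diag, single]
    intro hpa
    subst hpa
    exact fun hq => absurd hq.symm h

lemma psd_real_smul {m : Type*} [Fintype m] {M : Matrix m m ℂ} (hM : M.PosSemidef)
    {r : ℝ} (hr : 0 ≤ r) : (((r:ℂ)) • M).PosSemidef := by
  exact hM.smul (Complex.zero_le_real.2 hr)

/-- The Choi matrix of `Phi`, with `Choi (a,b) (c,d) = Φ(E_{bd})_{ac}`. -/
noncomputable def choiM (n : ℕ) (J : Fin 3 → Matrix (Fin n) (Fin n) ℂ) (lam : Fin 3 → ℝ) :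
    Matrix (Fin n × Fin n) (Fin n × Fin n) ℂ :=
  Matrix.of fun u v => Phi n J lam (single u.2 v.2 1) u.1 v.1

lemma choi_eq (n : ℕ) (J : Fin 3 → Matrix (Fin n) (Fin n) ℂ) (lam : Fin 3 → ℝ)
    (hT1 : (J 0)ᵀ = J 0) (hT2 : (J 1)ᵀ = -(J 1)) (hT3 : (J 2)ᵀ = J 2) :
    choiM n J lam = ((1 / (n : ℝ) : ℝ) : ℂ) •
      ((1 : Matrix (Fin n) (Fin n) ℂ) ⊗ₖ (1 : Matrix (Fin n) (Fin n) ℂ) +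
      ((3 / (spinJ n * (spinJ n + 1)) : ℝ) : ℂ) •
        ((lam 0 : ℂ) • (J 0 ⊗ₖ J 0) - (lam 1 : ℂ) • (J 1 ⊗ₖ J 1) +
          (lam 2 : ℂ) • (J 2 ⊗ₖ J 2))) := by
  ext ⟨a, b⟩ ⟨c, d⟩
  have h0 : J 0 d b = J 0 b d := by
    rw [show J 0 d b = (J 0)ᵀ b d from rfl, hT1]
  have h1 : J 1 d b = -(J 1 b d) := by
    rw [show J 1 d b = (J 1)ᵀ b d from rfl, hT2, Matrix.neg_apply]
  have h2 : J 2 d b = J 2 b d := by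
    rw [show J 2 d b = (J 2)ᵀ b d from rfl, hT3]
  have hcr : (3 / (spinJ n * (spinJ n + 1) * n) : ℝ) =
      (1 / (n : ℝ)) * (3 / (spinJ n * (spinJ n + 1))) := by
    rw [← div_div, mul_comm ((1:ℝ) / n), mul_one_div]
  have hc : ((3 / (spinJ n * (spinJ n + 1) * n) : ℝ) : ℂ) =
      ((1 / (n : ℝ) : ℝ) : ℂ) * ((3 / (spinJ n * (spinJ n + 1)) : ℝ) : ℂ) := by
    rw [hcr]; push_cast; ring
  simp only [choiM, Phi, Matrix.of_apply, Matrix.add_apply, Matrix.smul_apply,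
    Matrix.sub_apply, Matrix.one_apply, kroneckerMap_apply, trace_std, trace_std_mul,
    Fin.sum_univ_three, Matrix.sum_apply, smul_eq_mul, Prod.mk.injEq]
  rw [h0, h1, h2, hc]
  by_cases hac : a = c <;> by_cases hbd : b = d <;>
    simp [hac, hbd, Prod.ext_iff] <;> ring

/-- `Phi` as a linear map. -/
noncomputable def PhiL (n : ℕ) (J : Fin 3 → Matrix (Fin n) (Fin n) ℂ) (lam : Fin 3 → ℝ) :
    Matrix (Fin n) (Fin n) ℂ →ₗ[ℂ] Matrix (Fin n) (Fin n) ℂ where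
  toFun := Phi n J lam
  map_add' X Y := by
    simp only [Phi, Matrix.add_mul, Matrix.trace_add, Fin.sum_univ_three]
    module
  map_smul' c X := by
    simp only [Phi, Matrix.smul_mul, Matrix.trace_smul, Fin.sum_univ_three,
      RingHom.id_apply, smul_eq_mul]
    module

lemma phi_sum (n : ℕ) (J : Fin 3 → Matrix (Fin n) (Fin n) ℂ) (lam : Fin 3 → ℝ)
    (A : Matrix (Fin n) (Fin n) ℂ) :
    Phi n J lam A = ∑ p : Fin n, ∑ q : Fin n,
      A p q • Phi n J lam (single p q 1) := by
  have h : Phi n J lam A = PhiL n J lam A := rfl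
  rw [h]
  conv_lhs => rw [matrix_eq_sum_single A]
  rw [map_sum]
  apply Finset.sum_congr rfl
  intro p _
  rw [map_sum]
  apply Finset.sum_congr rfl
  intro q _
  rw [show single p q (A p q) = A p q • single p q (1:ℂ) by
    rw [smul_single]; norm_num, _root_.map_smul]
  rfl

lemma kron_conjT {m k : Type*} [Fintype m] [Fintype k]
    (A : Matrix m m ℂ) (B : Matrix k k ℂ) : (A ⊗ₖ B)ᴴ = Aᴴ ⊗ₖ Bᴴ := by
  ext ⟨i, j⟩ ⟨p, q⟩
  simp [conjTranspose_apply, kroneckerMap_apply, mul_comm]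

lemma std_kron {n k : ℕ} (p q : Fin n) (b d : Fin k) :
    single ((p, b) : Fin n × Fin k) ((q, d) : Fin n × Fin k) (1:ℂ) =
      single p q (1:ℂ) ⊗ₖ single b d (1:ℂ) := by
  ext ⟨x, y⟩ ⟨z, w⟩
  simp only [single, Matrix.of_apply, kroneckerMap_apply, Prod.mk.injEq]
  by_cases hpx : p = x <;> by_cases hqz : q = z <;> by_cases hby : b = y <;>
    by_cases hdw : d = w <;> simp [hpx, hqz, hby, hdw]

lemma sum_kron {m n k : Type*} [Fintype m] [Fintype n] [Fintype k]
    (f : m → Matrix n n ℂ) (F : Matrix k k ℂ) :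
    ∑ x : m, (f x ⊗ₖ F) = (∑ x : m, f x) ⊗ₖ F := by
  ext ⟨i, j⟩ ⟨p, q⟩
  simp [Matrix.sum_apply, kroneckerMap_apply, Finset.sum_mul]

set_option maxHeartbeats 1000000 in
theorem complete_positivity_iff_choi_posSemidef
    (n : ℕ) (hn : 2 ≤ n) (J : Fin 3 → Matrix (Fin n) (Fin n) ℂ)
    (hherm : ∀ i, (J i).IsHermitian)
    (htr : ∀ i, (J i).trace = 0)
    (htr2 : ∀ k l, (J k * J l).trace =
      if k = l then ((spinJ n * (spinJ n + 1) * (2 * spinJ n + 1) / 3 : ℝ) : ℂ) else 0)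
    (hT1 : (J 0)ᵀ = J 0) (hT2 : (J 1)ᵀ = -(J 1)) (hT3 : (J 2)ᵀ = J 2)
    (lam : Fin 3 → ℝ) :
    (∀ k : ℕ, 1 ≤ k →
      ∀ L : Matrix (Fin n × Fin k) (Fin n × Fin k) ℂ →ₗ[ℂ]
            Matrix (Fin n × Fin k) (Fin n × Fin k) ℂ,
        (∀ (A : Matrix (Fin n) (Fin n) ℂ) (B : Matrix (Fin k) (Fin k) ℂ),
          L (A ⊗ₖ B) = Phi n J lam A ⊗ₖ B) →
        ∀ R : Matrix (Fin n × Fin k) (Fin n × Fin k) ℂ, R.PosSemidef → (L R).PosSemidef) ↔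
    ((1 : Matrix (Fin n) (Fin n) ℂ) ⊗ₖ (1 : Matrix (Fin n) (Fin n) ℂ) +
      ((3 / (spinJ n * (spinJ n + 1)) : ℝ) : ℂ) •
        ((lam 0 : ℂ) • (J 0 ⊗ₖ J 0) - (lam 1 : ℂ) • (J 1 ⊗ₖ J 1) +
          (lam 2 : ℂ) • (J 2 ⊗ₖ J 2))).PosSemidef := by
  have hn0 : (n : ℝ) ≠ 0 := by positivity
  set T : Matrix (Fin n × Fin n) (Fin n × Fin n) ℂ :=
    (1 : Matrix (Fin n) (Fin n) ℂ) ⊗ₖ (1 : Matrix (Fin n) (Fin n) ℂ) +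
      ((3 / (spinJ n * (spinJ n + 1)) : ℝ) : ℂ) •
        ((lam 0 : ℂ) • (J 0 ⊗ₖ J 0) - (lam 1 : ℂ) • (J 1 ⊗ₖ J 1) +
          (lam 2 : ℂ) • (J 2 ⊗ₖ J 2)) with hTdef
  have hCT : choiM n J lam = ((1 / (n : ℝ) : ℝ) : ℂ) • T := choi_eq n J lam hT1 hT2 hT3
  have hTC : T = (((n : ℝ) : ℂ)) • choiM n J lam := by
    rw [hCT, smul_smul, ← Complex.ofReal_mul, mul_one_div_cancel hn0]
    simp
  constructor
  · -- completely positive → Choi PSD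
    intro H
    -- the canonical extension Φ ⊗ id_n
    let L0 : Matrix (Fin n × Fin n) (Fin n × Fin n) ℂ →ₗ[ℂ]
        Matrix (Fin n × Fin n) (Fin n × Fin n) ℂ :=
      { toFun := fun R => Matrix.of fun u v => ∑ p : Fin n, ∑ q : Fin n,
          choiM n J lam (u.1, p) (v.1, q) * R (p, u.2) (q, v.2)
        map_add' := by
          intro X Y
          ext u v
          simp [Matrix.add_apply, mul_add, Finset.sum_add_distrib]
        map_smul' := by
          intro c X
          ext u v
          simp only [Matrix.of_apply, Matrix.smul_apply, smul_eq_mul, RingHom.id_apply,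
            Finset.mul_sum]
          apply Finset.sum_congr rfl
          intro p _
          apply Finset.sum_congr rfl
          intro q _
          ring }
    have hL0 : ∀ (A : Matrix (Fin n) (Fin n) ℂ) (B : Matrix (Fin n) (Fin n) ℂ),
        L0 (A ⊗ₖ B) = Phi n J lam A ⊗ₖ B := by
      intro A B
      ext ⟨a, b⟩ ⟨c, d⟩
      show (∑ p : Fin n, ∑ q : Fin n,
          choiM n J lam (a, p) (c, q) * (A ⊗ₖ B) (p, b) (q, d)) =
        Phi n J lam A a c * B b d
      rw [phi_sum n J lam A]
      simp only [Matrix.sum_apply, Matrix.smul_apply, smul_eq_mul, kroneckerMap_apply,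
        Finset.sum_mul]
      apply Finset.sum_congr rfl
      intro p _
      apply Finset.sum_congr rfl
      intro q _
      show choiM n J lam (a, p) (c, q) * (A p q * B b d) =
        A p q * Phi n J lam (single p q 1) a c * B b d
      rw [show choiM n J lam (a, p) (c, q) =
        Phi n J lam (single p q 1) a c from rfl]
      ring
    -- the maximally entangled state
    set w : Matrix (Fin 1) (Fin n × Fin n) ℂ :=
      Matrix.of fun _ u => if u.1 = u.2 then 1 else 0 with hw
    have hRpsd : (wᴴ * w).PosSemidef := posSemidef_conjTranspose_mul_self w
    have hL0R : L0 (wᴴ * w) = choiM n J lam := by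
      ext ⟨a, b⟩ ⟨c, d⟩
      show (∑ p : Fin n, ∑ q : Fin n,
          choiM n J lam (a, p) (c, q) * (wᴴ * w) (p, b) (q, d)) = choiM n J lam (a, b) (c, d)
      have hwe : ∀ (p q b' d' : Fin n), (wᴴ * w) (p, b') (q, d') =
          (if p = b' then (1:ℂ) else 0) * (if q = d' then 1 else 0) := by
        intro p q b' d'
        simp only [Matrix.mul_apply, Matrix.conjTranspose_apply, hw, Matrix.of_apply,
          Finset.univ_unique, Finset.sum_singleton]
        split_ifs <;> simp
      simp only [hwe]
      rw [Finset.sum_eq_single b]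
      · rw [Finset.sum_eq_single d]
        · simp
        · intro q _ hq; simp [hq]
        · simp
      · intro p _ hp; simp [hp]
      · simp
    have := H n (le_trans one_le_two hn) L0 hL0 (wᴴ * w) hRpsd
    rw [hL0R] at this
    rw [hTC]
    exact psd_real_smul this (by positivity)
  · -- Choi PSD → completely positive
    intro hTpsd k _ L hL R hR
    have hC : (choiM n J lam).PosSemidef := by
      rw [hCT]
      exact psd_real_smul hTpsd (by positivity)
    obtain ⟨B, hB⟩ : ∃ B : Matrix (Fin n × Fin n) (Fin n × Fin n) ℂ, choiM n J lam = Bᴴ * B := by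
      open scoped MatrixOrder in
      exact CStarAlgebra.nonneg_iff_eq_star_mul_self.mp (Matrix.nonneg_iff_posSemidef.mpr hC)
    set K : (Fin n × Fin n) → Matrix (Fin n) (Fin n) ℂ :=
      fun m => Matrix.of fun a p => star (B m (a, p)) with hK
    have hKraus : ∀ p q : Fin n, Phi n J lam (single p q 1) =
        ∑ m : Fin n × Fin n, K m * single p q (1:ℂ) * (K m)ᴴ := by
      intro p q
      ext a c
      have hterm : ∀ m : Fin n × Fin n,
          (K m * single p q (1:ℂ) * (K m)ᴴ) a c =
            star (B m (a, p)) * B m (c, q) := by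
        intro m
        rw [Matrix.mul_apply, Finset.sum_eq_single q]
        · rw [Matrix.mul_single_apply_same, Matrix.conjTranspose_apply]
          simp [hK]
        · intro t _ ht
          rw [Matrix.mul_single_apply_of_ne _ _ _ _ _ ht, zero_mul]
        · simp
      rw [Matrix.sum_apply]
      simp only [hterm]
      calc Phi n J lam (single p q 1) a c
          = choiM n J lam (a, p) (c, q) := rfl
        _ = (Bᴴ * B) (a, p) (c, q) := by rw [← hB]
        _ = ∑ m : Fin n × Fin n, star (B m (a, p)) * B m (c, q) := by
            simp [Matrix.mul_apply, Matrix.conjTranspose_apply]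
    -- the Kraus-form linear map
    let G : Matrix (Fin n × Fin k) (Fin n × Fin k) ℂ →ₗ[ℂ]
        Matrix (Fin n × Fin k) (Fin n × Fin k) ℂ :=
      { toFun := fun S => ∑ m : Fin n × Fin n,
          (K m ⊗ₖ (1 : Matrix (Fin k) (Fin k) ℂ)) * S *
            (K m ⊗ₖ (1 : Matrix (Fin k) (Fin k) ℂ))ᴴ
        map_add' := by
          intro X Y
          simp [Matrix.mul_add, Matrix.add_mul, Finset.sum_add_distrib]
        map_smul' := by
          intro c X
          simp [Matrix.mul_smul, Matrix.smul_mul, Finset.smul_sum] }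
    have hLG : L R = G R := by
      have hbasis : ∀ u v : Fin n × Fin k,
          L (single u v (1:ℂ)) = G (single u v (1:ℂ)) := by
        rintro ⟨p, b⟩ ⟨q, d⟩
        rw [std_kron, hL]
        show Phi n J lam (single p q 1) ⊗ₖ single b d (1:ℂ) =
          ∑ m : Fin n × Fin n, (K m ⊗ₖ (1 : Matrix (Fin k) (Fin k) ℂ)) *
            (single p q (1:ℂ) ⊗ₖ single b d (1:ℂ)) *
            (K m ⊗ₖ (1 : Matrix (Fin k) (Fin k) ℂ))ᴴ
        have hterm : ∀ m : Fin n × Fin n,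
            (K m ⊗ₖ (1 : Matrix (Fin k) (Fin k) ℂ)) *
              (single p q (1:ℂ) ⊗ₖ single b d (1:ℂ)) *
              (K m ⊗ₖ (1 : Matrix (Fin k) (Fin k) ℂ))ᴴ =
            (K m * single p q (1:ℂ) * (K m)ᴴ) ⊗ₖ single b d (1:ℂ) := by
          intro m
          rw [kron_conjT, ← Matrix.mul_kronecker_mul, ← Matrix.mul_kronecker_mul,
            conjTranspose_one, one_mul, mul_one]
        simp only [hterm]
        rw [sum_kron, ← hKraus]
      conv_lhs => rw [matrix_eq_sum_single R]
      conv_rhs => rw [matrix_eq_sum_single R]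
      rw [map_sum, map_sum]
      apply Finset.sum_congr rfl
      intro u _
      rw [map_sum, map_sum]
      apply Finset.sum_congr rfl
      intro v _
      rw [show single u v (R u v) = R u v • single u v (1:ℂ) by
        rw [smul_single]; norm_num, _root_.map_smul, _root_.map_smul, hbasis]
    rw [hLG]
    show (∑ m : Fin n × Fin n,
      (K m ⊗ₖ (1 : Matrix (Fin k) (Fin k) ℂ)) * R *
        (K m ⊗ₖ (1 : Matrix (Fin k) (Fin k) ℂ))ᴴ).PosSemidef
    apply Finset.sum_induction _ _ (fun a b ha hb => ha.add hb) Matrix.PosSemidef.zero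
    intro m _
    exact hR.mul_mul_conjTranspose_same _
end

section
/- For real numbers λ₁,λ₂,λ₃, the 4×4 matrix I₂ ⊗ I₂ + λ₁·σ₁⊗σ₁ − λ₂·σ₂⊗σ₂ + λ₃·σ₃⊗σ₃ is positive semidefinite if and only if 1 + λ₃ ≥ |λ₁ + λ₂| and 1 − λ₃ ≥ |λ₁ − λ₂|. -/
open Matrix Kronecker
open scoped ComplexOrder

/-- The Pauli matrix σ₁. -/
def sigma1 : Matrix (Fin 2) (Fin 2) ℂ := !![0, 1; 1, 0]

/-- The Pauli matrix σ₂. -/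
def sigma2 : Matrix (Fin 2) (Fin 2) ℂ := !![0, -Complex.I; Complex.I, 0]

/-- The Pauli matrix σ₃. -/
def sigma3 : Matrix (Fin 2) (Fin 2) ℂ := !![1, 0; 0, -1]

private noncomputable def Mmat (l1 l2 l3 : ℝ) : Matrix (Fin 2 × Fin 2) (Fin 2 × Fin 2) ℂ :=
  (1 : Matrix (Fin 2) (Fin 2) ℂ) ⊗ₖ (1 : Matrix (Fin 2) (Fin 2) ℂ) +
      (l1 : ℂ) • (sigma1 ⊗ₖ sigma1) - (l2 : ℂ) • (sigma2 ⊗ₖ sigma2) +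
      (l3 : ℂ) • (sigma3 ⊗ₖ sigma3)

private lemma quad (l1 l2 l3 : ℝ) (x : Fin 2 × Fin 2 → ℂ) :
    star x ⬝ᵥ Mmat l1 l2 l3 *ᵥ x =
      ((1+l3 : ℝ):ℂ) * ((starRingEnd ℂ) (x (0,0)) * x (0,0) + (starRingEnd ℂ) (x (1,1)) * x (1,1))
    + ((l1+l2 : ℝ):ℂ) * ((starRingEnd ℂ) (x (0,0)) * x (1,1) + (starRingEnd ℂ) (x (1,1)) * x (0,0))
    + (((1-l3 : ℝ):ℂ) * ((starRingEnd ℂ) (x (0,1)) * x (0,1) + (starRingEnd ℂ) (x (1,0)) * x (1,0))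
    + ((l1-l2 : ℝ):ℂ) * ((starRingEnd ℂ) (x (0,1)) * x (1,0) + (starRingEnd ℂ) (x (1,0)) * x (0,1))) := by
  simp [Mmat, dotProduct, mulVec, Fintype.sum_prod_type, Fin.sum_univ_two, sigma1, sigma2, sigma3,
    Matrix.one_apply, Matrix.add_apply, Matrix.sub_apply, Matrix.smul_apply, kroneckerMap_apply,
    Pi.star_apply]
  ring

private lemma key (a b : ℝ) (h : |b| ≤ a) (s t : ℂ) :
    0 ≤ (a:ℂ) * ((starRingEnd ℂ) s * s + (starRingEnd ℂ) t * t)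
      + (b:ℂ) * ((starRingEnd ℂ) s * t + (starRingEnd ℂ) t * s) := by
  have h1 : (starRingEnd ℂ) s * s = ((‖s‖ ^ 2 : ℝ) : ℂ) := by
    rw [mul_comm, Complex.mul_conj']; norm_cast
  have h2 : (starRingEnd ℂ) t * t = ((‖t‖ ^ 2 : ℝ) : ℂ) := by
    rw [mul_comm, Complex.mul_conj']; norm_cast
  have h3 : (starRingEnd ℂ) s * t + (starRingEnd ℂ) t * s = ((2 * ((starRingEnd ℂ) s * t).re : ℝ) : ℂ) := by
    have h4 : (starRingEnd ℂ) t * s = (starRingEnd ℂ) ((starRingEnd ℂ) s * t) := by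
      simp [_root_.map_mul, mul_comm]
    rw [h4, Complex.add_conj]
  rw [h1, h2, h3]
  have heq : (a:ℂ) * (((‖s‖ ^ 2 : ℝ) : ℂ) + ((‖t‖ ^ 2 : ℝ) : ℂ))
      + (b:ℂ) * ((2 * ((starRingEnd ℂ) s * t).re : ℝ) : ℂ)
      = ((a * (‖s‖ ^ 2 + ‖t‖ ^ 2) + b * (2 * ((starRingEnd ℂ) s * t).re) : ℝ) : ℂ) := by
    push_cast; ring
  rw [heq, ← Complex.ofReal_zero, Complex.real_le_real]
  have hre : |((starRingEnd ℂ) s * t).re| ≤ ‖s‖ * ‖t‖ := by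
    calc |((starRingEnd ℂ) s * t).re| ≤ ‖((starRingEnd ℂ) s * t)‖ := Complex.abs_re_le_norm _
    _ = ‖s‖ * ‖t‖ := by simp [_root_.map_mul]
  have hb := abs_le.mp h
  have habs := abs_le.mp hre
  nlinarith [sq_nonneg (‖s‖ - ‖t‖), sq_nonneg (‖s‖ + ‖t‖),
    norm_nonneg s, norm_nonneg t]

private lemma herm (l1 l2 l3 : ℝ) : (Mmat l1 l2 l3).IsHermitian := by
  ext ⟨i,j⟩ ⟨k,l⟩
  simp only [Matrix.conjTranspose_apply]
  fin_cases i <;> fin_cases j <;> fin_cases k <;> fin_cases l <;>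
    simp [Mmat, sigma1, sigma2, sigma3, Matrix.one_apply, Matrix.add_apply, Matrix.sub_apply,
      Matrix.smul_apply, kroneckerMap_apply, Complex.conj_ofReal, Prod.ext_iff]

private def tv (s t u v : ℂ) : Fin 2 × Fin 2 → ℂ := fun p => !![s, u; v, t] p.1 p.2

private lemma tv00 (s t u v : ℂ) : tv s t u v (0,0) = s := rfl
private lemma tv11 (s t u v : ℂ) : tv s t u v (1,1) = t := rfl
private lemma tv01 (s t u v : ℂ) : tv s t u v (0,1) = u := rfl
private lemma tv10 (s t u v : ℂ) : tv s t u v (1,0) = v := rfl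

theorem qubit_choi_posSemidef_iff (l1 l2 l3 : ℝ) :
    ((1 : Matrix (Fin 2) (Fin 2) ℂ) ⊗ₖ (1 : Matrix (Fin 2) (Fin 2) ℂ) +
      (l1 : ℂ) • (sigma1 ⊗ₖ sigma1) - (l2 : ℂ) • (sigma2 ⊗ₖ sigma2) +
      (l3 : ℂ) • (sigma3 ⊗ₖ sigma3)).PosSemidef ↔
    1 + l3 ≥ |l1 + l2| ∧ 1 - l3 ≥ |l1 - l2| := by
  show (Mmat l1 l2 l3).PosSemidef ↔ _
  constructor
  · intro h
    have test : ∀ s t u v : ℂ, 0 ≤ star (tv s t u v) ⬝ᵥ Mmat l1 l2 l3 *ᵥ (tv s t u v) :=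
      fun s t u v => h.dotProduct_mulVec_nonneg _
    have get : ∀ s t u v : ℝ,
        0 ≤ (1+l3) * (s*s + t*t) + (l1+l2) * (2*s*t) + ((1-l3) * (u*u + v*v) + (l1-l2) * (2*u*v)) := by
      intro s t u v
      have := test s t u v
      rw [quad] at this
      simp only [tv00, tv11, tv01, tv10] at this
      have heq : ((1+l3 : ℝ):ℂ) * ((starRingEnd ℂ) (s:ℂ) * s + (starRingEnd ℂ) (t:ℂ) * t)
        + ((l1+l2 : ℝ):ℂ) * ((starRingEnd ℂ) (s:ℂ) * t + (starRingEnd ℂ) (t:ℂ) * s)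
        + (((1-l3 : ℝ):ℂ) * ((starRingEnd ℂ) (u:ℂ) * u + (starRingEnd ℂ) (v:ℂ) * v)
        + ((l1-l2 : ℝ):ℂ) * ((starRingEnd ℂ) (u:ℂ) * v + (starRingEnd ℂ) (v:ℂ) * u))
        = (((1+l3) * (s*s + t*t) + (l1+l2) * (2*s*t) + ((1-l3) * (u*u + v*v) + (l1-l2) * (2*u*v) ) : ℝ) : ℂ) := by
        simp only [Complex.conj_ofReal]; push_cast; ring
      rw [heq, ← Complex.ofReal_zero, Complex.real_le_real] at this
      exact this
    constructor
    · rw [ge_iff_le, abs_le]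
      have h1 := get 1 1 0 0
      have h2 := get 1 (-1) 0 0
      constructor <;> nlinarith
    · rw [ge_iff_le, abs_le]
      have h1 := get 0 0 1 1
      have h2 := get 0 0 1 (-1)
      constructor <;> nlinarith
  · rintro ⟨h1, h2⟩
    refine .of_dotProduct_mulVec_nonneg (herm l1 l2 l3) (fun x => ?_)
    rw [quad]
    exact add_nonneg (key _ _ (by linarith [le_abs_self (l1+l2)] : |l1+l2| ≤ 1 + l3) _ _)
      (key _ _ (by linarith [le_abs_self (l1-l2)] : |l1-l2| ≤ 1 - l3) _ _)
end

section
/- Suppose additionally that J₁ᵀ = J₁, J₂ᵀ = −J₂, J₃ᵀ = J₃. If the matrix Ω := Iₙ ⊗ Iₙ + (3/(j(j+1)))·(λ₁·J₁⊗J₁ − λ₂·J₂⊗J₂ + λ₃·J₃⊗J₃) is separable, i.e., there exist a finite index set K and positive semidefinite matrices A_k, B_k ∈ Mₙ(ℂ) (k ∈ K) with Ω = Σ_{k∈K} A_k ⊗ B_k, then both matrices Iₙ ⊗ Iₙ + (3/(j(j+1)))·(λ₁·J₁⊗J₁ + λ₂·J₂⊗J₂ + λ₃·J₃⊗J₃)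 and Iₙ ⊗ Iₙ + (3/(j(j+1)))·(λ₁·J₁⊗J₁ − λ₂·J₂⊗J₂ + λ₃·J₃⊗J₃) are positive semidefinite. -/
open Matrix Kronecker
open scoped ComplexOrder

private lemma conjTranspose_kron {n : ℕ} (A B : Matrix (Fin n) (Fin n) ℂ) :
    (A ⊗ₖ B)ᴴ = Aᴴ ⊗ₖ Bᴴ := by
  ext ⟨i, j⟩ ⟨k, l⟩
  simp [conjTranspose_apply, kroneckerMap_apply, mul_comm]

private lemma kron_posSemidef {n : ℕ} {A B : Matrix (Fin n) (Fin n) ℂ}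
    (hA : A.PosSemidef) (hB : B.PosSemidef) : (A ⊗ₖ B).PosSemidef := by
  exact Matrix.PosSemidef.kronecker hA hB

/-- Partial transpose on the first factor. -/
private def PT {n : ℕ} (M : Matrix (Fin n × Fin n) (Fin n × Fin n) ℂ) :
    Matrix (Fin n × Fin n) (Fin n × Fin n) ℂ :=
  fun p q => M (q.1, p.2) (p.1, q.2)

private lemma PT_add {n : ℕ} (M N : Matrix (Fin n × Fin n) (Fin n × Fin n) ℂ) :
    PT (M + N) = PT M + PT N := rfl

private lemma PT_smul {n : ℕ} (c : ℂ) (M : Matrix (Fin n × Fin n) (Fin n × Fin n) ℂ) :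
    PT (c • M) = c • PT M := rfl

private lemma PT_sub {n : ℕ} (M N : Matrix (Fin n × Fin n) (Fin n × Fin n) ℂ) :
    PT (M - N) = PT M - PT N := rfl

private lemma neg_kron {n : ℕ} (A B : Matrix (Fin n) (Fin n) ℂ) :
    (-A) ⊗ₖ B = -(A ⊗ₖ B) := by
  ext ⟨i, j⟩ ⟨k, l⟩
  simp [kroneckerMap_apply]

private lemma PT_kron {n : ℕ} (A B : Matrix (Fin n) (Fin n) ℂ) :
    PT (A ⊗ₖ B) = Aᵀ ⊗ₖ B := by
  ext ⟨i, j⟩ ⟨k, l⟩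
  simp [PT, kroneckerMap_apply, transpose_apply]

private lemma PT_sum {n m : ℕ} (f : Fin m → Matrix (Fin n × Fin n) (Fin n × Fin n) ℂ) :
    PT (∑ k, f k) = ∑ k, PT (f k) := by
  ext ⟨i, j⟩ ⟨k, l⟩
  simp [PT, Matrix.sum_apply]

set_option maxHeartbeats 1000000 in
theorem separable_choi_implies_ppt
    (n : ℕ) (hn : 2 ≤ n) (J : Fin 3 → Matrix (Fin n) (Fin n) ℂ)
    (hherm : ∀ i, (J i).IsHermitian)
    (hT1 : (J 0)ᵀ = J 0) (hT2 : (J 1)ᵀ = -(J 1)) (hT3 : (J 2)ᵀ = J 2)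
    (lam : Fin 3 → ℝ)
    (hsep : ∃ (m : ℕ) (A B : Fin m → Matrix (Fin n) (Fin n) ℂ),
      (∀ k, (A k).PosSemidef) ∧ (∀ k, (B k).PosSemidef) ∧
      (1 : Matrix (Fin n) (Fin n) ℂ) ⊗ₖ (1 : Matrix (Fin n) (Fin n) ℂ) +
        ((3 / (spinJ n * (spinJ n + 1)) : ℝ) : ℂ) •
          ((lam 0 : ℂ) • (J 0 ⊗ₖ J 0) - (lam 1 : ℂ) • (J 1 ⊗ₖ J 1) +
            (lam 2 : ℂ) • (J 2 ⊗ₖ J 2)) = ∑ k, A k ⊗ₖ B k) :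
    ((1 : Matrix (Fin n) (Fin n) ℂ) ⊗ₖ (1 : Matrix (Fin n) (Fin n) ℂ) +
      ((3 / (spinJ n * (spinJ n + 1)) : ℝ) : ℂ) •
        ((lam 0 : ℂ) • (J 0 ⊗ₖ J 0) + (lam 1 : ℂ) • (J 1 ⊗ₖ J 1) +
          (lam 2 : ℂ) • (J 2 ⊗ₖ J 2))).PosSemidef ∧
    ((1 : Matrix (Fin n) (Fin n) ℂ) ⊗ₖ (1 : Matrix (Fin n) (Fin n) ℂ) +
      ((3 / (spinJ n * (spinJ n + 1)) : ℝ) : ℂ) •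
        ((lam 0 : ℂ) • (J 0 ⊗ₖ J 0) - (lam 1 : ℂ) • (J 1 ⊗ₖ J 1) +
          (lam 2 : ℂ) • (J 2 ⊗ₖ J 2))).PosSemidef := by
  obtain ⟨m, A, B, hA, hB, hΩ⟩ := hsep
  have hsum : (∑ k, A k ⊗ₖ B k).PosSemidef := by
    apply Finset.sum_induction _ Matrix.PosSemidef
      (fun a b ha hb => ha.add hb) Matrix.PosSemidef.zero
    intro k _
    exact kron_posSemidef (hA k) (hB k)
  refine ⟨?_, by rw [hΩ]; exact hsum⟩
  -- Partial transpose
  have key : ((1 : Matrix (Fin n) (Fin n) ℂ) ⊗ₖ (1 : Matrix (Fin n) (Fin n) ℂ) +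
      ((3 / (spinJ n * (spinJ n + 1)) : ℝ) : ℂ) •
        ((lam 0 : ℂ) • (J 0 ⊗ₖ J 0) + (lam 1 : ℂ) • (J 1 ⊗ₖ J 1) +
          (lam 2 : ℂ) • (J 2 ⊗ₖ J 2))) = ∑ k, (A k)ᵀ ⊗ₖ B k := by
    have := congrArg PT hΩ
    rw [PT_sum] at this
    simp only [PT_kron] at this
    rw [PT_add, PT_smul, PT_add, PT_sub, PT_smul, PT_smul, PT_smul,
      PT_kron, PT_kron, PT_kron, PT_kron, hT1, hT2, hT3,
      Matrix.transpose_one] at this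
    rw [← this]
    rw [neg_kron, smul_neg, sub_neg_eq_add]
  rw [key]
  apply Finset.sum_induction _ Matrix.PosSemidef
    (fun a b ha hb => ha.add hb) Matrix.PosSemidef.zero
  intro k _
  exact kron_posSemidef (hA k).transpose (hB k)
end

section
/- For real numbers λ₁,λ₂,λ₃, the two 4×4 matrices I₂ ⊗ I₂ + λ₁·σ₁⊗σ₁ + λ₂·σ₂⊗σ₂ + λ₃·σ₃⊗σ₃ and I₂ ⊗ I₂ + λ₁·σ₁⊗σ₁ − λ₂·σ₂⊗σ₂ + λ₃·σ₃⊗σ₃ are both positive semidefinite if and only if |λ₁| + |λ₂| + |λ₃| ≤ 1. -/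
open Matrix Kronecker
open scoped ComplexOrder

private lemma aux_psd {n : Type*} [Fintype n] [DecidableEq n] (r : ℝ) (hr : 0 ≤ r)
    (v : n → ℂ) : ((r : ℂ) • vecMulVec v (star v)).PosSemidef := by
  refine .of_dotProduct_mulVec_nonneg ?_ ?_
  · ext i j
    simp [conjTranspose_apply, vecMulVec_apply, Complex.conj_ofReal]
    ring_nf
    tauto
  · intro x
    have h1 : vecMulVec v (star v) *ᵥ x = (star v ⬝ᵥ x) • v := by
      ext i
      simp [mulVec, vecMulVec_apply, dotProduct, Finset.sum_mul, Finset.mul_sum]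
      exact Finset.sum_congr rfl fun j _ => by ring
    have h : star x ⬝ᵥ ((r : ℂ) • vecMulVec v (star v)) *ᵥ x
        = (r : ℂ) * (star (star v ⬝ᵥ x) * (star v ⬝ᵥ x)) := by
      rw [smul_mulVec, dotProduct_smul, h1, dotProduct_smul, smul_eq_mul, smul_eq_mul]
      congr 1
      rw [mul_comm]
      congr 1
      simp [dotProduct]
      exact Finset.sum_congr rfl fun j _ => by ring
    rw [h]
    exact mul_nonneg (Complex.zero_le_real.mpr hr) (star_mul_self_nonneg _)

private lemma cle {x : ℝ} (h : (0:ℂ) ≤ (x:ℂ)) : 0 ≤ x := Complex.zero_le_real.mp h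

private def w1 : Fin 2 × Fin 2 → ℂ := fun p => !![(1:ℂ),0;0,1] p.1 p.2
private def w2 : Fin 2 × Fin 2 → ℂ := fun p => !![(1:ℂ),0;0,-1] p.1 p.2
private def w3 : Fin 2 × Fin 2 → ℂ := fun p => !![(0:ℂ),1;1,0] p.1 p.2
private def w4 : Fin 2 × Fin 2 → ℂ := fun p => !![(0:ℂ),1;-1,0] p.1 p.2

set_option maxHeartbeats 1600000 in
private lemma decomp (l1 l2 l3 : ℝ) :
    ((1 : Matrix (Fin 2) (Fin 2) ℂ) ⊗ₖ (1 : Matrix (Fin 2) (Fin 2) ℂ) +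
        (l1 : ℂ) • (sigma1 ⊗ₖ sigma1) + (l2 : ℂ) • (sigma2 ⊗ₖ sigma2) +
        (l3 : ℂ) • (sigma3 ⊗ₖ sigma3)) =
      (((1+l3+l1-l2)/2 : ℝ) : ℂ) • vecMulVec w1 (star w1) +
      (((1+l3-l1+l2)/2 : ℝ) : ℂ) • vecMulVec w2 (star w2) +
      (((1-l3+l1+l2)/2 : ℝ) : ℂ) • vecMulVec w3 (star w3) +
      (((1-l3-l1-l2)/2 : ℝ) : ℂ) • vecMulVec w4 (star w4) := by
  ext ⟨i1, i2⟩ ⟨j1, j2⟩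
  fin_cases i1 <;> fin_cases i2 <;> fin_cases j1 <;> fin_cases j2 <;>
    simp [sigma1, sigma2, sigma3, w1, w2, w3, w4, vecMulVec_apply, Matrix.one_apply,
      Complex.ext_iff] <;>
    push_cast <;> ring_nf <;> norm_num <;> decide

private lemma key_psd (l1 l2 l3 : ℝ) (habs : |l1| + |l2| + |l3| ≤ 1) :
    ((1 : Matrix (Fin 2) (Fin 2) ℂ) ⊗ₖ (1 : Matrix (Fin 2) (Fin 2) ℂ) +
        (l1 : ℂ) • (sigma1 ⊗ₖ sigma1) + (l2 : ℂ) • (sigma2 ⊗ₖ sigma2) +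
        (l3 : ℂ) • (sigma3 ⊗ₖ sigma3)).PosSemidef := by
  rw [decomp]
  have b1 : 0 ≤ (1+l3+l1-l2)/2 := by
    linarith [neg_abs_le l1, neg_abs_le l3, le_abs_self l2, habs]
  have b2 : 0 ≤ (1+l3-l1+l2)/2 := by
    linarith [le_abs_self l1, neg_abs_le l3, neg_abs_le l2, habs]
  have b3 : 0 ≤ (1-l3+l1+l2)/2 := by
    linarith [neg_abs_le l1, le_abs_self l3, neg_abs_le l2, habs]
  have b4 : 0 ≤ (1-l3-l1-l2)/2 := by
    linarith [le_abs_self l1, le_abs_self l3, le_abs_self l2, habs]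
  exact (((aux_psd _ b1 w1).add (aux_psd _ b2 w2)).add (aux_psd _ b3 w3)).add
    (aux_psd _ b4 w4)

theorem qubit_ppt_iff (l1 l2 l3 : ℝ) :
    (((1 : Matrix (Fin 2) (Fin 2) ℂ) ⊗ₖ (1 : Matrix (Fin 2) (Fin 2) ℂ) +
        (l1 : ℂ) • (sigma1 ⊗ₖ sigma1) + (l2 : ℂ) • (sigma2 ⊗ₖ sigma2) +
        (l3 : ℂ) • (sigma3 ⊗ₖ sigma3)).PosSemidef ∧
      ((1 : Matrix (Fin 2) (Fin 2) ℂ) ⊗ₖ (1 : Matrix (Fin 2) (Fin 2) ℂ) +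
        (l1 : ℂ) • (sigma1 ⊗ₖ sigma1) - (l2 : ℂ) • (sigma2 ⊗ₖ sigma2) +
        (l3 : ℂ) • (sigma3 ⊗ₖ sigma3)).PosSemidef) ↔
    |l1| + |l2| + |l3| ≤ 1 := by
  constructor
  · rintro ⟨h1, h2⟩
    have e1 := h1.dotProduct_mulVec_nonneg w1
    have e2 := h1.dotProduct_mulVec_nonneg w2
    have e3 := h1.dotProduct_mulVec_nonneg w3
    have e4 := h1.dotProduct_mulVec_nonneg w4
    have f1 := h2.dotProduct_mulVec_nonneg w1
    have f2 := h2.dotProduct_mulVec_nonneg w2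
    have f3 := h2.dotProduct_mulVec_nonneg w3
    have f4 := h2.dotProduct_mulVec_nonneg w4
    simp [w1, w2, w3, w4, dotProduct, mulVec, Fintype.sum_prod_type, Fin.sum_univ_two,
      sigma1, sigma2, sigma3, kroneckerMap_apply, Matrix.one_apply,
      sub_eq_add_neg] at e1 e2 e3 e4 f1 f2 f3 f4
    have r1 : (0:ℝ) ≤ 2+2*l3+2*l1-2*l2 := cle (by convert e1 using 1 <;> push_cast <;> ring)
    have r2 : (0:ℝ) ≤ 2+2*l3-2*l1+2*l2 := cle (by convert e2 using 1 <;> push_cast <;> ring)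
    have r3 : (0:ℝ) ≤ 2-2*l3+2*l1+2*l2 := cle (by convert e3 using 1 <;> push_cast <;> ring)
    have r4 : (0:ℝ) ≤ 2-2*l3-2*l1-2*l2 := cle (by convert e4 using 1 <;> push_cast <;> ring)
    have s1 : (0:ℝ) ≤ 2+2*l3+2*l1+2*l2 := cle (by convert f1 using 1 <;> push_cast <;> ring)
    have s2 : (0:ℝ) ≤ 2+2*l3-2*l1-2*l2 := cle (by convert f2 using 1 <;> push_cast <;> ring)
    have s3 : (0:ℝ) ≤ 2-2*l3+2*l1-2*l2 := cle (by convert f3 using 1 <;> push_cast <;> ring)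
    have s4 : (0:ℝ) ≤ 2-2*l3-2*l1+2*l2 := cle (by convert f4 using 1 <;> push_cast <;> ring)
    rcases abs_cases l1 with ⟨a1, _⟩ | ⟨a1, _⟩ <;>
    rcases abs_cases l2 with ⟨a2, _⟩ | ⟨a2, _⟩ <;>
    rcases abs_cases l3 with ⟨a3, _⟩ | ⟨a3, _⟩ <;> rw [a1, a2, a3] <;> linarith
  · intro hle
    refine ⟨key_psd l1 l2 l3 hle, ?_⟩
    have habs' : |l1| + |(-l2)| + |l3| ≤ 1 := by rw [abs_neg]; exact hle
    have := key_psd l1 (-l2) l3 habs'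
    convert this using 2
    push_cast
    rw [sub_eq_add_neg, neg_smul]
end

section
/- Suppose additionally that J₁ᵀ = J₁, J₂ᵀ = −J₂, J₃ᵀ = J₃. If some linear map L on matrices indexed by Fin n × Fin n satisfying L(A ⊗ B) = Φ(A) ⊗ Φ(B) for all A, B ∈ Mₙ(ℂ) maps positive semidefinite matrices to positive semidefinite matrices (i.e., Φ is 2-tensor-stable positive), then the matrix Iₙ ⊗ Iₙ + (3/(j(j+1)))·(λ₁²·J₁⊗J₁ − λ₂²·J₂⊗J₂ + λ₃²·J₃⊗J₃) is positive semidefinite (i.e., the Choi matrix of Φ∘Φ is positive semidefinite, so Φ∘Φ is completely positive). -/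
open Matrix Kronecker
open scoped ComplexOrder

section helpers

set_option linter.unusedSectionVars false

variable {ι κ m' n' p' q' : Type*} [Fintype ι] [Fintype κ]

lemma aux_sum_kronecker [Fintype m'] (s : Finset ι) (f : ι → Matrix m' n' ℂ)
    (B : Matrix p' q' ℂ) : (∑ i ∈ s, f i) ⊗ₖ B = ∑ i ∈ s, f i ⊗ₖ B := by
  ext ⟨a, b⟩ ⟨c, d⟩
  simp [Matrix.kroneckerMap_apply, Matrix.sum_apply, Finset.sum_mul]

lemma aux_kronecker_sum [Fintype m'] (s : Finset ι) (A : Matrix m' n' ℂ)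
    (f : ι → Matrix p' q' ℂ) : A ⊗ₖ (∑ i ∈ s, f i) = ∑ i ∈ s, A ⊗ₖ f i := by
  ext ⟨a, b⟩ ⟨c, d⟩
  simp [Matrix.kroneckerMap_apply, Matrix.sum_apply, Finset.mul_sum]

lemma aux_sum_smul_comm (f : ι → κ → ℂ) (M : κ → Matrix m' n' ℂ) :
    ∑ a : ι, ∑ i : κ, f a i • M i = ∑ i : κ, (∑ a : ι, f a i) • M i := by
  rw [Finset.sum_comm]
  simp [Finset.sum_smul]

lemma aux_trace_stdBasisMatrix_mul [DecidableEq m'] [Fintype m'] (a b : m')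
    (M : Matrix m' m' ℂ) : (Matrix.single a b (1 : ℂ) * M).trace = M b a := by
  simp [Matrix.trace, Matrix.diag, Matrix.mul_apply, Matrix.single, ite_and,
    Finset.sum_ite_eq]

lemma aux_posSemidef_vecMulVec (v : ι → ℂ) : (Matrix.vecMulVec v (star v)).PosSemidef := by
  rw [Matrix.posSemidef_iff_dotProduct_mulVec]
  refine ⟨?_, fun x => ?_⟩
  · ext i j
    simp [Matrix.vecMulVec_apply, Matrix.conjTranspose_apply, mul_comm]
  · have h : (Matrix.vecMulVec v (star v)).mulVec x = (star v ⬝ᵥ x) • v := by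
      ext i
      simp [Matrix.mulVec, dotProduct, Matrix.vecMulVec_apply, Finset.mul_sum,
        mul_comm, mul_left_comm]
    have h2 : star x ⬝ᵥ v = star (star v ⬝ᵥ x) := by
      simp [dotProduct, mul_comm]
    rw [h, dotProduct_smul, h2, smul_eq_mul]
    exact mul_star_self_nonneg _

lemma aux_posSemidef_real_smul {M : Matrix ι ι ℂ} (hM : M.PosSemidef) {r : ℝ}
    (hr : 0 ≤ r) : ((r : ℂ) • M).PosSemidef := by
  rw [Matrix.posSemidef_iff_dotProduct_mulVec] at hM ⊢
  refine ⟨?_, fun x => ?_⟩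
  · have h1 := hM.1
    unfold Matrix.IsHermitian at h1 ⊢
    rw [Matrix.conjTranspose_smul, h1]
    simp [Complex.conj_ofReal]
  · rw [Matrix.smul_mulVec, dotProduct_smul, smul_eq_mul]
    exact mul_nonneg (by exact_mod_cast hr) (hM.2 x)

end helpers

theorem two_tensor_stable_positive_implies_square_cp
    (n : ℕ) (hn : 2 ≤ n) (J : Fin 3 → Matrix (Fin n) (Fin n) ℂ)
    (hherm : ∀ i, (J i).IsHermitian)
    (htr : ∀ i, (J i).trace = 0)
    (htr2 : ∀ k l, (J k * J l).trace =
      if k = l then ((spinJ n * (spinJ n + 1) * (2 * spinJ n + 1) / 3 : ℝ) : ℂ) else 0)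
    (hT1 : (J 0)ᵀ = J 0) (hT2 : (J 1)ᵀ = -(J 1)) (hT3 : (J 2)ᵀ = J 2)
    (lam : Fin 3 → ℝ)
    (htsp : ∃ L : Matrix (Fin n × Fin n) (Fin n × Fin n) ℂ →ₗ[ℂ]
          Matrix (Fin n × Fin n) (Fin n × Fin n) ℂ,
      (∀ A B : Matrix (Fin n) (Fin n) ℂ, L (A ⊗ₖ B) = Phi n J lam A ⊗ₖ Phi n J lam B) ∧
      (∀ R : Matrix (Fin n × Fin n) (Fin n × Fin n) ℂ, R.PosSemidef → (L R).PosSemidef)) :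
    ((1 : Matrix (Fin n) (Fin n) ℂ) ⊗ₖ (1 : Matrix (Fin n) (Fin n) ℂ) +
      ((3 / (spinJ n * (spinJ n + 1)) : ℝ) : ℂ) •
        (((lam 0 ^ 2 : ℝ) : ℂ) • (J 0 ⊗ₖ J 0) - ((lam 1 ^ 2 : ℝ) : ℂ) • (J 1 ⊗ₖ J 1) +
          ((lam 2 ^ 2 : ℝ) : ℂ) • (J 2 ⊗ₖ J 2))).PosSemidef := by
  classical
  obtain ⟨L, hL, hLpos⟩ := htsp
  have hnR : (2 : ℝ) ≤ (n : ℝ) := by exact_mod_cast hn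
  have hn0 : (0 : ℝ) < n := by linarith
  have hj : 0 < spinJ n := by unfold spinJ; linarith
  have hj1 : 0 < spinJ n + 1 := by linarith
  have h2j : 2 * spinJ n + 1 = (n : ℝ) := by unfold spinJ; ring
  set ν : ℂ := ((1 / (n : ℝ) : ℝ) : ℂ) with hν
  set c : ℂ := ((3 / (spinJ n * (spinJ n + 1) * n) : ℝ) : ℂ) with hc
  set τ : ℂ := ((spinJ n * (spinJ n + 1) * (2 * spinJ n + 1) / 3 : ℝ) : ℂ) with hτ
  set C : ℂ := ((3 / (spinJ n * (spinJ n + 1)) : ℝ) : ℂ) with hC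
  set u : Matrix (Fin n) (Fin n) ℂ := ν • (1 : Matrix (Fin n) (Fin n) ℂ) with hu
  set e : Fin n → Fin n → Matrix (Fin n) (Fin n) ℂ :=
    fun a b => Matrix.single a b (1 : ℂ) with he
  set G : Fin n → Fin n → Matrix (Fin n) (Fin n) ℂ :=
    fun a b => ∑ i : Fin 3, (lam i : ℂ) • (J i b a) • J i with hG
  -- trace facts
  have htre : ∀ a b : Fin n, (e a b).trace = (if a = b then (1 : ℂ) else 0) := by
    intro a b
    by_cases h : a = b
    · subst h; simp [he]
    · simp [he, h, Matrix.trace_single_eq_of_ne (h := h)]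
  -- Phi on basis matrices
  have hPhi : ∀ a b : Fin n, Phi n J lam (e a b)
      = (if a = b then (1 : ℂ) else 0) • u + c • G a b := by
    intro a b
    simp only [Phi, he, aux_trace_stdBasisMatrix_mul]
    rw [← hν, ← hc]
    have : (Matrix.single a b (1 : ℂ)).trace = (if a = b then (1 : ℂ) else 0) := by
      simpa [he] using htre a b
    rw [this, smul_comm, hu, hG]
  -- expansion of the Kronecker square
  have hexpand : ∀ a b : Fin n, Phi n J lam (e a b) ⊗ₖ Phi n J lam (e a b)
      = (if a = b then (1 : ℂ) else 0) • (u ⊗ₖ u)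
        + ((if a = b then (1 : ℂ) else 0) • (c • (u ⊗ₖ G a b))
        + ((if a = b then (1 : ℂ) else 0) • (c • (G a b ⊗ₖ u))
        + (c * c) • (G a b ⊗ₖ G a b))) := by
    intro a b
    rw [hPhi]
    rcases eq_or_ne a b with h | h
    · subst h
      rw [if_pos rfl]
      simp [Matrix.add_kronecker, Matrix.kronecker_add,
        Matrix.smul_kronecker, Matrix.kronecker_smul, smul_smul]
      abel
    · simp [h, Matrix.zero_kronecker,
        Matrix.kronecker_zero, Matrix.smul_kronecker, Matrix.kronecker_smul, smul_smul]
  -- split the big sum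
  have hsplit : ∑ a : Fin n, ∑ b : Fin n, Phi n J lam (e a b) ⊗ₖ Phi n J lam (e a b)
      = (∑ a : Fin n, ∑ b : Fin n, (if a = b then (1 : ℂ) else 0) • (u ⊗ₖ u))
        + ((∑ a : Fin n, ∑ b : Fin n, (if a = b then (1 : ℂ) else 0) • (c • (u ⊗ₖ G a b)))
        + ((∑ a : Fin n, ∑ b : Fin n, (if a = b then (1 : ℂ) else 0) • (c • (G a b ⊗ₖ u)))
        + (∑ a : Fin n, ∑ b : Fin n, (c * c) • (G a b ⊗ₖ G a b)))) := by
    simp only [hexpand, Finset.sum_add_distrib]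
  have hS1 : (∑ a : Fin n, ∑ b : Fin n, (if a = b then (1 : ℂ) else 0) • (u ⊗ₖ u))
      = (n : ℂ) • (u ⊗ₖ u) := by
    simp only [ite_smul, one_smul, zero_smul, Finset.sum_ite_eq, Finset.mem_univ, if_true]
    rw [Finset.sum_const, Finset.card_univ, Fintype.card_fin, Nat.cast_smul_eq_nsmul]
  have hGdiag : ∑ a : Fin n, G a a = 0 := by
    simp only [hG]
    rw [Finset.sum_comm]
    refine Finset.sum_eq_zero fun i _ => ?_
    rw [← Finset.smul_sum, ← Finset.sum_smul]
    have : ∑ a : Fin n, J i a a = (J i).trace := by simp [Matrix.trace, Matrix.diag]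
    rw [this, htr i, zero_smul, smul_zero]
  have hS2 : (∑ a : Fin n, ∑ b : Fin n,
      (if a = b then (1 : ℂ) else 0) • (c • (u ⊗ₖ G a b))) = 0 := by
    have h1 : ∀ a : Fin n, (∑ b : Fin n,
        (if a = b then (1 : ℂ) else 0) • (c • (u ⊗ₖ G a b))) = c • (u ⊗ₖ G a a) := by
      intro a
      simp [ite_smul, Finset.sum_ite_eq]
    simp only [h1]
    rw [← Finset.smul_sum, ← aux_kronecker_sum, hGdiag, Matrix.kronecker_zero, smul_zero]
  have hS3 : (∑ a : Fin n, ∑ b : Fin n,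
      (if a = b then (1 : ℂ) else 0) • (c • (G a b ⊗ₖ u))) = 0 := by
    have h1 : ∀ a : Fin n, (∑ b : Fin n,
        (if a = b then (1 : ℂ) else 0) • (c • (G a b ⊗ₖ u))) = c • (G a a ⊗ₖ u) := by
      intro a
      simp [ite_smul, Finset.sum_ite_eq]
    simp only [h1]
    rw [← Finset.smul_sum, ← aux_sum_kronecker, hGdiag, Matrix.zero_kronecker, smul_zero]
  -- the quadratic term
  have hGk : ∀ a b : Fin n, G a b ⊗ₖ G a b
      = ∑ q : Fin 3 × Fin 3,
          ((lam q.1 : ℂ) * (lam q.2 : ℂ) * (J q.1 b a * J q.2 b a)) • (J q.1 ⊗ₖ J q.2) := by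
    intro a b
    ext ⟨p, r⟩ ⟨s, t⟩
    simp only [hG, Matrix.kroneckerMap_apply, Matrix.sum_apply, Matrix.smul_apply,
      smul_eq_mul, Fintype.sum_prod_type]
    rw [Finset.sum_mul_sum]
    refine Finset.sum_congr rfl fun i _ => Finset.sum_congr rfl fun k _ => ?_
    ring
  have hQ0 : ∑ a : Fin n, ∑ b : Fin n, G a b ⊗ₖ G a b
      = ∑ q : Fin 3 × Fin 3,
          ((lam q.1 : ℂ) * (lam q.2 : ℂ) *
            (∑ a : Fin n, ∑ b : Fin n, J q.1 b a * J q.2 b a)) • (J q.1 ⊗ₖ J q.2) := by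
    simp only [hGk]
    rw [show (∑ a : Fin n, ∑ b : Fin n, ∑ q : Fin 3 × Fin 3,
        ((lam q.1 : ℂ) * (lam q.2 : ℂ) * (J q.1 b a * J q.2 b a)) • (J q.1 ⊗ₖ J q.2))
        = ∑ a : Fin n, ∑ q : Fin 3 × Fin 3,
          (∑ b : Fin n, (lam q.1 : ℂ) * (lam q.2 : ℂ) * (J q.1 b a * J q.2 b a)) •
            (J q.1 ⊗ₖ J q.2) from
      Finset.sum_congr rfl fun a _ => aux_sum_smul_comm _ _]
    rw [aux_sum_smul_comm]
    refine Finset.sum_congr rfl fun q _ => ?_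
    congr 1
    simp only [Finset.mul_sum]
  have hκ : ∀ i k : Fin 3, (∑ a : Fin n, ∑ b : Fin n, J i b a * J k b a)
      = ((J i)ᵀ * J k).trace := by
    intro i k
    simp [Matrix.trace, Matrix.diag, Matrix.mul_apply, Matrix.transpose_apply]
  have htrans : ∀ i : Fin 3, (J i)ᵀ = (if i = 1 then -(J i) else J i) := by
    intro i
    fin_cases i
    · simpa using hT1
    · simpa using hT2
    · simpa using hT3
  have hval : ∀ i k : Fin 3, ((J i)ᵀ * J k).trace
      = (if i = k then (if i = 1 then -τ else τ) else 0) := by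
    intro i k
    rw [htrans]
    by_cases hik : i = k
    · subst hik
      by_cases hi1 : i = 1
      · subst hi1; simp [htr2]
      · simp [hi1, htr2]
    · by_cases hi1 : i = 1
      · subst hi1; simp [htr2, hik]
      · simp [hi1, htr2, hik]
  have hS4 : ∑ q : Fin 3 × Fin 3,
        ((lam q.1 : ℂ) * (lam q.2 : ℂ) *
          (∑ a : Fin n, ∑ b : Fin n, J q.1 b a * J q.2 b a)) • (J q.1 ⊗ₖ J q.2)
      = ((lam 0 : ℂ) * (lam 0 : ℂ) * τ) • (J 0 ⊗ₖ J 0)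
        + ((lam 1 : ℂ) * (lam 1 : ℂ) * (-τ)) • (J 1 ⊗ₖ J 1)
        + ((lam 2 : ℂ) * (lam 2 : ℂ) * τ) • (J 2 ⊗ₖ J 2) := by
    simp only [hκ, hval]
    rw [Fintype.sum_prod_type]
    simp [Fin.sum_univ_three]
  have hS4' : ∑ a : Fin n, ∑ b : Fin n, (c * c) • (G a b ⊗ₖ G a b)
      = (c * c) • (∑ a : Fin n, ∑ b : Fin n, G a b ⊗ₖ G a b) := by
    simp [Finset.smul_sum]
  -- scalar identities
  have hnne : (n : ℝ) ≠ 0 := ne_of_gt hn0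
  have hjne : spinJ n ≠ 0 := ne_of_gt hj
  have hj1ne : spinJ n + 1 ≠ 0 := ne_of_gt hj1
  have k1 : (n : ℂ) * ((n : ℂ) * (ν * ν)) = 1 := by
    rw [hν]
    have h : (n : ℝ) * ((n : ℝ) * ((1 / (n : ℝ)) * (1 / (n : ℝ)))) = 1 := by
      field_simp
    exact_mod_cast h
  have k2 : (n : ℂ) * ((c * c) * ((lam 0 : ℂ) * (lam 0 : ℂ) * τ))
      = C * ((lam 0 ^ 2 : ℝ) : ℂ) := by
    rw [hc, hτ, hC]
    have h : (n : ℝ) * ((3 / (spinJ n * (spinJ n + 1) * n)) * (3 / (spinJ n * (spinJ n + 1) * n))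
          * (lam 0 * lam 0 * (spinJ n * (spinJ n + 1) * (2 * spinJ n + 1) / 3)))
        = 3 / (spinJ n * (spinJ n + 1)) * (lam 0 ^ 2) := by
      rw [h2j]
      field_simp
    exact_mod_cast h
  have k3 : (n : ℂ) * ((c * c) * ((lam 1 : ℂ) * (lam 1 : ℂ) * (-τ)))
      = -(C * ((lam 1 ^ 2 : ℝ) : ℂ)) := by
    rw [hc, hτ, hC]
    have h : (n : ℝ) * ((3 / (spinJ n * (spinJ n + 1) * n)) * (3 / (spinJ n * (spinJ n + 1) * n))
          * (lam 1 * lam 1 * -(spinJ n * (spinJ n + 1) * (2 * spinJ n + 1) / 3)))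
        = -(3 / (spinJ n * (spinJ n + 1)) * (lam 1 ^ 2)) := by
      rw [h2j]
      field_simp
    exact_mod_cast h
  have k4 : (n : ℂ) * ((c * c) * ((lam 2 : ℂ) * (lam 2 : ℂ) * τ))
      = C * ((lam 2 ^ 2 : ℝ) : ℂ) := by
    rw [hc, hτ, hC]
    have h : (n : ℝ) * ((3 / (spinJ n * (spinJ n + 1) * n)) * (3 / (spinJ n * (spinJ n + 1) * n))
          * (lam 2 * lam 2 * (spinJ n * (spinJ n + 1) * (2 * spinJ n + 1) / 3)))
        = 3 / (spinJ n * (spinJ n + 1)) * (lam 2 ^ 2) := by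
      rw [h2j]
      field_simp
    exact_mod_cast h
  -- the key identity
  have key : (1 : Matrix (Fin n) (Fin n) ℂ) ⊗ₖ (1 : Matrix (Fin n) (Fin n) ℂ) +
        C • (((lam 0 ^ 2 : ℝ) : ℂ) • (J 0 ⊗ₖ J 0) - ((lam 1 ^ 2 : ℝ) : ℂ) • (J 1 ⊗ₖ J 1) +
          ((lam 2 ^ 2 : ℝ) : ℂ) • (J 2 ⊗ₖ J 2))
      = (n : ℂ) • (∑ a : Fin n, ∑ b : Fin n, Phi n J lam (e a b) ⊗ₖ Phi n J lam (e a b)) := by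
    rw [hsplit, hS1, hS2, hS3, hS4', hQ0, hS4]
    have huu : u ⊗ₖ u = (ν * ν) • ((1 : Matrix (Fin n) (Fin n) ℂ) ⊗ₖ 1) := by
      rw [hu, Matrix.smul_kronecker, Matrix.kronecker_smul, smul_smul]
    rw [huu]
    simp only [zero_add, smul_add, smul_smul]
    rw [k1, k2, k3, k4, one_smul]
    module
  -- positivity
  set w : Fin n × Fin n → ℂ := fun p => if p.1 = p.2 then 1 else 0 with hw
  have hEw : (∑ a : Fin n, ∑ b : Fin n, e a b ⊗ₖ e a b)
      = Matrix.vecMulVec w (star w) := by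
    ext ⟨p, q⟩ ⟨r, s⟩
    simp only [Matrix.sum_apply, he, Matrix.kroneckerMap_apply, Matrix.single,
      Matrix.of_apply, Matrix.vecMulVec_apply, Pi.star_apply, hw]
    by_cases hpq : p = q <;> by_cases hrs : r = s
    · subst hpq; subst hrs
      simp [ite_and, Finset.sum_ite_eq, mul_ite, ite_mul]
    all_goals
      refine Eq.trans (Finset.sum_eq_zero fun a _ => Finset.sum_eq_zero fun b _ => ?_) ?_
      · by_cases h1 : a = p ∧ b = r
        · rw [if_pos h1, one_mul, if_neg]
          rintro ⟨h2a, h2b⟩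
          first
          | exact absurd (h1.1.symm.trans h2a) hpq
          | exact absurd (h1.2.symm.trans h2b) hrs
        · rw [if_neg h1, zero_mul]
      · simp [hpq, hrs, apply_ite (star : ℂ → ℂ)]
  have hE : (∑ a : Fin n, ∑ b : Fin n, e a b ⊗ₖ e a b).PosSemidef := by
    rw [hEw]; exact aux_posSemidef_vecMulVec w
  have hLE : L (∑ a : Fin n, ∑ b : Fin n, e a b ⊗ₖ e a b)
      = ∑ a : Fin n, ∑ b : Fin n, Phi n J lam (e a b) ⊗ₖ Phi n J lam (e a b) := by
    rw [map_sum]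
    refine Finset.sum_congr rfl fun a _ => ?_
    rw [map_sum]
    exact Finset.sum_congr rfl fun b _ => hL _ _
  rw [key, ← hLE]
  rw [show ((n : ℕ) : ℂ) = (((n : ℝ)) : ℂ) by push_cast; ring]
  exact aux_posSemidef_real_smul (hLpos _ hE) (le_of_lt hn0)
end

section
/- Suppose additionally that J₁ᵀ = J₁, J₂ᵀ = −J₂, J₃ᵀ = J₃. Let P ∈ M_{n²}(ℂ) be the matrix with entries P_{(a,b),(c,d)} = (1/n)·[a=b]·[c=d] (the projector onto the maximally entangled state). Then for every linear map L on matrices indexed by Fin n × Fin n satisfying L(A ⊗ B) = Φ(A) ⊗ Φ(B) for all A, B ∈ Mₙ(ℂ), one has n²·L(P) = Iₙ ⊗ Iₙ + (3/(j(j+1)))·(λ₁²·J₁⊗J₁ − λ₂²·J₂⊗J₂ + λ₃²·J₃⊗J₃). -/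
open Matrix Kronecker
open scoped ComplexOrder

theorem choi_matrix_of_squared_map_formula
    (n : ℕ) (hn : 2 ≤ n) (J : Fin 3 → Matrix (Fin n) (Fin n) ℂ)
    (hherm : ∀ i, (J i).IsHermitian)
    (htr : ∀ i, (J i).trace = 0)
    (htr2 : ∀ k l, (J k * J l).trace =
      if k = l then ((spinJ n * (spinJ n + 1) * (2 * spinJ n + 1) / 3 : ℝ) : ℂ) else 0)
    (hT1 : (J 0)ᵀ = J 0) (hT2 : (J 1)ᵀ = -(J 1)) (hT3 : (J 2)ᵀ = J 2)
    (lam : Fin 3 → ℝ)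
    (P : Matrix (Fin n × Fin n) (Fin n × Fin n) ℂ)
    (hP : P = Matrix.of fun p q : Fin n × Fin n =>
      (1 / (n : ℂ)) * (if p.1 = p.2 then 1 else 0) * (if q.1 = q.2 then 1 else 0)) :
    ∀ L : Matrix (Fin n × Fin n) (Fin n × Fin n) ℂ →ₗ[ℂ]
          Matrix (Fin n × Fin n) (Fin n × Fin n) ℂ,
      (∀ A B : Matrix (Fin n) (Fin n) ℂ, L (A ⊗ₖ B) = Phi n J lam A ⊗ₖ Phi n J lam B) →
      ((n : ℂ) ^ 2) • L P =
        (1 : Matrix (Fin n) (Fin n) ℂ) ⊗ₖ (1 : Matrix (Fin n) (Fin n) ℂ) +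
          ((3 / (spinJ n * (spinJ n + 1)) : ℝ) : ℂ) •
            (((lam 0 ^ 2 : ℝ) : ℂ) • (J 0 ⊗ₖ J 0) - ((lam 1 ^ 2 : ℝ) : ℂ) • (J 1 ⊗ₖ J 1) +
              ((lam 2 ^ 2 : ℝ) : ℂ) • (J 2 ⊗ₖ J 2)) := by
  intro L hL
  -- basic numeric facts
  have hnR : (2 : ℝ) ≤ (n : ℝ) := by exact_mod_cast hn
  have hj : (0 : ℝ) < spinJ n := by unfold spinJ; linarith
  have hKpos : (0 : ℝ) < spinJ n * (spinJ n + 1) := by positivity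
  have hKne : spinJ n * (spinJ n + 1) ≠ 0 := ne_of_gt hKpos
  have hnne : (n : ℝ) ≠ 0 := by linarith
  have hn0 : (n : ℂ) ≠ 0 := by exact_mod_cast hnne
  -- entries of Phi on standard basis matrices
  have hent : ∀ k m p q : Fin n,
      Phi n J lam (single k m 1) p q =
        ((1 / (n : ℝ) : ℝ) : ℂ) * (if k = m then 1 else 0) * (if p = q then 1 else 0) +
        ((3 / (spinJ n * (spinJ n + 1) * n) : ℝ) : ℂ) *
          ∑ i : Fin 3, (lam i : ℂ) * (J i m k * J i p q) := by
    intro k m p q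
    have h1 : (single k m (1:ℂ)).trace = if k = m then 1 else 0 := by
      simp [Matrix.trace, Matrix.diag, Matrix.single, ite_and, Finset.sum_ite_eq, eq_comm]
    have h2 : ∀ i, (single k m (1:ℂ) * J i).trace = J i m k := fun i => by
      simp [Matrix.trace, Matrix.diag, Matrix.mul_apply, Matrix.single, ite_and,
        Finset.sum_ite_eq]
    simp only [Phi, h1, h2, Matrix.add_apply, Matrix.smul_apply, Matrix.sum_apply,
      smul_eq_mul, mul_assoc, ite_apply, Matrix.zero_apply, mul_ite, mul_zero, mul_one]
    split_ifs <;> simp_all [Matrix.smul_apply, Matrix.one_apply, smul_eq_mul]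
  set c : ℂ := ((3 / (spinJ n * (spinJ n + 1) * n) : ℝ) : ℂ) with hc
  set K' : ℂ := ((spinJ n * (spinJ n + 1) * (2 * spinJ n + 1) / 3 : ℝ) : ℂ) with hK'
  have hcast : ((1 / (n : ℝ) : ℝ) : ℂ) = 1 / (n : ℂ) := by push_cast; ring
  simp only [hcast] at hent
  -- sum values
  have hS1 : (∑ k : Fin n, ∑ m : Fin n,
      (if k = m then (1:ℂ) else 0) * (if k = m then 1 else 0)) = (n : ℂ) := by
    simp [ite_and, Finset.sum_ite_eq]
  have hS2 : ∀ i, (∑ k : Fin n, ∑ m : Fin n,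
      (if k = m then (1:ℂ) else 0) * J i m k) = 0 := by
    intro i
    have : (∑ k : Fin n, ∑ m : Fin n, (if k = m then (1:ℂ) else 0) * J i m k)
        = ∑ k : Fin n, J i k k := by
      refine Finset.sum_congr rfl fun k _ => ?_
      simp [Finset.sum_ite_eq, mul_ite, ite_mul]
    rw [this]
    have := htr i
    simpa [Matrix.trace, Matrix.diag] using this
  have htrT : ∀ A B : Matrix (Fin n) (Fin n) ℂ,
      (Aᵀ * B).trace = ∑ k, ∑ m, A m k * B m k := fun A B => by
    simp [Matrix.trace, Matrix.diag, Matrix.mul_apply, Matrix.transpose_apply]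
  have hS3 : ∀ i i' : Fin 3, (∑ k : Fin n, ∑ m : Fin n, J i m k * J i' m k)
      = (if i = 1 then -1 else 1) * (if i = i' then K' else 0) := by
    intro i i'
    rw [← htrT]
    have hi : i = 0 ∨ i = 1 ∨ i = 2 := by omega
    rcases hi with h | h | h <;> subst h
    · rw [hT1, htr2, if_neg (by decide : ¬(0:Fin 3) = 1), one_mul]
    · rw [hT2]
      have : ((-(J 1)) * J i').trace = -((J 1 * J i').trace) := by
        rw [Matrix.neg_mul, Matrix.trace_neg]
      rw [this, htr2, if_pos rfl]
      split_ifs <;> ring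
    · rw [hT3, htr2, if_neg (by decide : ¬(2:Fin 3) = 1), one_mul]
  -- key scalar identity
  have key : ∀ p q r s : Fin n,
      (∑ k : Fin n, ∑ m : Fin n,
        Phi n J lam (single k m 1) p q * Phi n J lam (single k m 1) r s) =
      (1 / (n : ℂ)) * (if p = q then 1 else 0) * (if r = s then 1 else 0) +
      c ^ 2 * K' * ((lam 0 : ℂ) ^ 2 * (J 0 p q * J 0 r s)
        - (lam 1 : ℂ) ^ 2 * (J 1 p q * J 1 r s)
        + (lam 2 : ℂ) ^ 2 * (J 2 p q * J 2 r s)) := by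
    intro p q r s
    have step1 : (∑ k : Fin n, ∑ m : Fin n,
        Phi n J lam (single k m 1) p q * Phi n J lam (single k m 1) r s) =
      ∑ k : Fin n, ∑ m : Fin n,
        (((1 / (n : ℂ)) * (1 / (n : ℂ)) * (if p = q then 1 else 0) * (if r = s then 1 else 0))
            * ((if k = m then (1:ℂ) else 0) * (if k = m then 1 else 0))
        + (((1 / (n : ℂ)) * c) * ((if p = q then (1:ℂ) else 0) * (lam 0 : ℂ) * J 0 r s
              + (if r = s then (1:ℂ) else 0) * (lam 0 : ℂ) * J 0 p q))
            * ((if k = m then (1:ℂ) else 0) * J 0 m k)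
        + (((1 / (n : ℂ)) * c) * ((if p = q then (1:ℂ) else 0) * (lam 1 : ℂ) * J 1 r s
              + (if r = s then (1:ℂ) else 0) * (lam 1 : ℂ) * J 1 p q))
            * ((if k = m then (1:ℂ) else 0) * J 1 m k)
        + (((1 / (n : ℂ)) * c) * ((if p = q then (1:ℂ) else 0) * (lam 2 : ℂ) * J 2 r s
              + (if r = s then (1:ℂ) else 0) * (lam 2 : ℂ) * J 2 p q))
            * ((if k = m then (1:ℂ) else 0) * J 2 m k)
        + (c * c * (lam 0 : ℂ) * (lam 0 : ℂ) * (J 0 p q * J 0 r s)) * (J 0 m k * J 0 m k)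
        + (c * c * (lam 0 : ℂ) * (lam 1 : ℂ) * (J 0 p q * J 1 r s)) * (J 0 m k * J 1 m k)
        + (c * c * (lam 0 : ℂ) * (lam 2 : ℂ) * (J 0 p q * J 2 r s)) * (J 0 m k * J 2 m k)
        + (c * c * (lam 1 : ℂ) * (lam 0 : ℂ) * (J 1 p q * J 0 r s)) * (J 1 m k * J 0 m k)
        + (c * c * (lam 1 : ℂ) * (lam 1 : ℂ) * (J 1 p q * J 1 r s)) * (J 1 m k * J 1 m k)
        + (c * c * (lam 1 : ℂ) * (lam 2 : ℂ) * (J 1 p q * J 2 r s)) * (J 1 m k * J 2 m k)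
        + (c * c * (lam 2 : ℂ) * (lam 0 : ℂ) * (J 2 p q * J 0 r s)) * (J 2 m k * J 0 m k)
        + (c * c * (lam 2 : ℂ) * (lam 1 : ℂ) * (J 2 p q * J 1 r s)) * (J 2 m k * J 1 m k)
        + (c * c * (lam 2 : ℂ) * (lam 2 : ℂ) * (J 2 p q * J 2 r s)) * (J 2 m k * J 2 m k)) := by
      refine Finset.sum_congr rfl fun k _ => Finset.sum_congr rfl fun m _ => ?_
      rw [hent k m p q, hent k m r s]
      simp only [Fin.sum_univ_three]
      ring
    rw [step1]
    simp only [Finset.sum_add_distrib, ← Finset.mul_sum]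
    rw [hS1, hS2 0, hS2 1, hS2 2, hS3 0 0, hS3 0 1, hS3 0 2, hS3 1 0, hS3 1 1, hS3 1 2,
      hS3 2 0, hS3 2 1, hS3 2 2]
    have e1 : ((0:Fin 3) = 1) = False := by simp
    have e2 : ((2:Fin 3) = 1) = False := by decide
    have e3 : ((1:Fin 3) = 1) = True := by simp
    have e4 : ((0:Fin 3) = 0) = True := by simp
    have e5 : ((2:Fin 3) = 2) = True := by simp
    have e6 : ((0:Fin 3) = 2) = False := by decide
    have e7 : ((1:Fin 3) = 0) = False := by decide
    have e8 : ((1:Fin 3) = 2) = False := by decide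
    have e9 : ((2:Fin 3) = 0) = False := by decide
    simp only [e1, e2, e3, e4, e5, e6, e7, e8, e9, if_true, if_false]
    field_simp
    split_ifs <;> ring
  -- decomposition of P
  have hPsum : P = (1 / (n : ℂ)) • ∑ k : Fin n, ∑ m : Fin n,
      (single k m (1:ℂ)) ⊗ₖ (single k m (1:ℂ)) := by
    subst hP
    ext ⟨a, b⟩ ⟨c, d⟩
    simp only [Matrix.of_apply, Matrix.smul_apply, Matrix.sum_apply, Matrix.kroneckerMap_apply,
      Matrix.single, Matrix.of_apply, smul_eq_mul, ite_and]
    rw [Finset.sum_comm]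
    simp [Finset.sum_ite_eq, Finset.mul_sum, mul_ite, mul_zero, mul_one, eq_comm]
    split_ifs <;> rfl
  -- coefficient arithmetic
  have hA : (n : ℂ) ^ 2 * ((1 / (n : ℂ)) * (1 / (n : ℂ))) = 1 := by
    field_simp
  have h2jC : 2 * (spinJ n : ℂ) + 1 = (n : ℂ) := by
    have h : 2 * spinJ n + 1 = (n : ℝ) := by unfold spinJ; ring
    exact_mod_cast h
  have hjC : (spinJ n : ℂ) ≠ 0 := by
    exact_mod_cast ne_of_gt hj
  have hj1C : ((spinJ n : ℂ) + 1) ≠ 0 := by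
    have h : spinJ n + 1 ≠ 0 := by positivity
    exact_mod_cast h
  have hB : (n : ℂ) ^ 2 * ((1 / (n : ℂ)) * (c ^ 2 * K'))
      = 3 / ((spinJ n : ℂ) * ((spinJ n : ℂ) + 1)) := by
    rw [hc, hK']
    push_cast
    rw [h2jC]
    field_simp
  -- final assembly
  rw [hPsum, _root_.map_smul]
  have hLsum : L (∑ k : Fin n, ∑ m : Fin n,
      (single k m (1:ℂ)) ⊗ₖ (single k m (1:ℂ)))
      = ∑ k : Fin n, ∑ m : Fin n,
        Phi n J lam (single k m 1) ⊗ₖ Phi n J lam (single k m 1) := by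
    rw [map_sum]
    refine Finset.sum_congr rfl fun k _ => ?_
    rw [map_sum]
    exact Finset.sum_congr rfl fun m _ => hL _ _
  rw [hLsum]
  ext ⟨a, b⟩ ⟨c', d⟩
  simp only [Matrix.smul_apply, Matrix.sum_apply, Matrix.kroneckerMap_apply, Matrix.add_apply,
    Matrix.sub_apply, Matrix.one_apply, smul_eq_mul]
  rw [key a c' b d]
  push_cast
  linear_combination ((if a = c' then (1:ℂ) else 0) * (if b = d then (1:ℂ) else 0)) * hA +
    ((lam 0 : ℂ) ^ 2 * (J 0 a c' * J 0 b d) - (lam 1 : ℂ) ^ 2 * (J 1 a c' * J 1 b d) +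
      (lam 2 : ℂ) ^ 2 * (J 2 a c' * J 2 b d)) * hB
end
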